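/- Let p, q: Ω → [1,∞) be measurable with q(t) ≤ p(t) a.e., and define Musielak–Orlicz functions φ(t,u) = u^{q(t)}/q(t) and φ₁(t,u) = u^{p(t)}/p(t). Then (φ⊖φ₁)(t,u) = u^{r(t)}/r(t) where 1/r(t) = 1/q(t) − 1/p(t) (with r(t) = ∞ interpreted as the indicator-type conjugate when p(t) = q(t)). -/

import Mathlib

open MeasureTheory ENNReal NNReal Filter

noncomputable section

variable {Ω : Type*} [MeasurableSpace Ω]

/-- A Young function: vanishes at zero, tends to infinity, and is convex in the
extended-value sense on `[0,∞)`. -/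
def IsYoung (φ : ℝ≥0 → ℝ≥0∞) : Prop :=
  φ 0 = 0 ∧ Tendsto φ atTop (nhds (∞ : ℝ≥0∞)) ∧
    ∀ u v θ : ℝ≥0, θ ≤ 1 →
      φ (θ * u + (1 - θ) * v) ≤ (θ : ℝ≥0∞) * φ u + ((1 - θ : ℝ≥0) : ℝ≥0∞) * φ v

/-- A Musielak--Orlicz function: `φ t` is a Young function for a.e. `t` and
`t ↦ φ t u` is measurable for each `u`. -/
def IsMusielakOrlicz (μ : Measure Ω) (φ : Ω → ℝ≥0 → ℝ≥0∞) : Prop :=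
  (∀ᵐ t ∂μ, IsYoung (φ t)) ∧ ∀ u : ℝ≥0, Measurable fun t => φ t u

/-- `b_φ(t) = inf {u : φ(t,u) = ∞}` (equal to `∞` if `φ(t,·)` is finite everywhere). -/
def bFun (φ : Ω → ℝ≥0 → ℝ≥0∞) (t : Ω) : ℝ≥0∞ :=
  ⨅ (v : ℝ≥0) (_ : φ t v = ∞), (v : ℝ≥0∞)

/-- The convex modular `I_φ(x) = ∫ φ(t,|x(t)|) dμ`. -/
def modular (μ : Measure Ω) (φ : Ω → ℝ≥0 → ℝ≥0∞) (x : Ω → ℝ) : ℝ≥0∞ :=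
  ∫⁻ t, φ t ‖x t‖₊ ∂μ

/-- The Luxemburg norm `inf {λ > 0 : I_φ(x/λ) ≤ 1}` (with value `∞` if no such `λ`). -/
def luxNorm (μ : Measure Ω) (φ : Ω → ℝ≥0 → ℝ≥0∞) (x : Ω → ℝ) : ℝ≥0∞ :=
  ⨅ (lam : ℝ≥0) (_ : 0 < lam ∧ modular μ φ (fun t => x t / (lam : ℝ)) ≤ 1), (lam : ℝ≥0∞)

/-- Membership in the Musielak--Orlicz space `L^φ`: `I_φ(λ x) < ∞` for some `λ > 0`. -/
def MemLphi (μ : Measure Ω) (φ : Ω → ℝ≥0 → ℝ≥0∞) (x : Ω → ℝ) : Prop :=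
  ∃ lam : ℝ≥0, 0 < lam ∧ modular μ φ (fun t => (lam : ℝ) * x t) < ∞

/-- The generalized Young conjugate of `φ₁` with respect to `φ` (formula used
on the non-atomic part): `(φ ⊖ φ₁)(t,u) = sup {φ(t,su) - φ₁(t,s) : 0 ≤ s < b_{φ₁}(t)}`. -/
def ominus (φ φ₁ : Ω → ℝ≥0 → ℝ≥0∞) (t : Ω) (u : ℝ≥0) : ℝ≥0∞ :=
  ⨆ (s : ℝ≥0) (_ : (s : ℝ≥0∞) < bFun φ₁ t), φ t (s * u) - φ₁ t s

/-- The right-continuous inverse `φ⁻¹(t,u) = inf {v ≥ 0 : φ(t,v) > u}`. -/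
def rcInv (φ : Ω → ℝ≥0 → ℝ≥0∞) (t : Ω) (u : ℝ≥0∞) : ℝ≥0∞ :=
  ⨅ (v : ℝ≥0) (_ : u < φ t v), (v : ℝ≥0∞)

/-- The generalized Young conjugate on the whole space: at an atom `t`
the supremum is taken over `0 ≤ s ≤ min (1/φ⁻¹(t,1/μ{t})) (b_{φ₁}(t)/2)`. -/
def ominusFull (μ : Measure Ω) (φ φ₁ : Ω → ℝ≥0 → ℝ≥0∞) (t : Ω) (u : ℝ≥0) : ℝ≥0∞ :=
  if μ {t} = 0 then ominus φ φ₁ t u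
  else ⨆ (s : ℝ≥0) (_ : (s : ℝ≥0∞) ≤ min (rcInv φ t (μ {t})⁻¹)⁻¹ (bFun φ₁ t / 2)),
    φ t (s * u) - φ₁ t s

/-- `y` is a pointwise multiplier from `L^{φ₁}` to `L^{φ}`. -/
def MemMul (μ : Measure Ω) (φ₁ φ : Ω → ℝ≥0 → ℝ≥0∞) (y : Ω → ℝ) : Prop :=
  ∀ x : Ω → ℝ, Measurable x → MemLphi μ φ₁ x → MemLphi μ φ (fun t => x t * y t)

/-- The operator norm of a pointwise multiplier. -/
def mulNorm (μ : Measure Ω) (φ₁ φ : Ω → ℝ≥0 → ℝ≥0∞) (y : Ω → ℝ) : ℝ≥0∞ :=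
  ⨆ (x : Ω → ℝ) (_ : Measurable x ∧ luxNorm μ φ₁ x ≤ 1), luxNorm μ φ (fun t => x t * y t)

/-- The truncated generalized Young conjugate `φ ⊖_a φ₁` (non-atomic part):
supremum over `0 ≤ s ≤ a` when `b_{φ₁}(t) = ∞`, and over
`0 ≤ s ≤ (a/(a+1)) b_{φ₁}(t)` when `b_{φ₁}(t) < ∞`. -/
def ominusTr (a : ℝ≥0) (φ φ₁ : Ω → ℝ≥0 → ℝ≥0∞) (t : Ω) (u : ℝ≥0) : ℝ≥0∞ :=
  if bFun φ₁ t = ∞ then ⨆ (s : ℝ≥0) (_ : s ≤ a), φ t (s * u) - φ₁ t s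
  else ⨆ (s : ℝ≥0) (_ : (s : ℝ≥0∞) ≤ ((a : ℝ≥0∞) / ((a : ℝ≥0∞) + 1)) * bFun φ₁ t),
    φ t (s * u) - φ₁ t s

/-- For `φ(t,u) = u^{q(t)}/q(t)` and `φ₁(t,u) = u^{p(t)}/p(t)`
with `1 ≤ q ≤ p`, the conjugate is `(φ ⊖ φ₁)(t,u) = u^{r(t)}/r(t)` with
`1/r = 1/q - 1/p` (i.e. `r = pq/(p-q)`), interpreted as the indicator-type
conjugate where `p(t) = q(t)`. -/
private lemma ddiv (x : ℝ≥0∞) {a b : ℝ} (ha : 0 < a) (hb : 0 < b) :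
    x / ENNReal.ofReal a / ENNReal.ofReal b = x / ENNReal.ofReal (a * b) := by
  rw [ENNReal.ofReal_mul ha.le, div_eq_mul_inv, div_eq_mul_inv, div_eq_mul_inv, mul_assoc,
    ENNReal.mul_inv (Or.inl (ENNReal.ofReal_pos.2 ha).ne') (Or.inl ENNReal.ofReal_ne_top)]

theorem ominus_nakano_power (μ : Measure Ω) [SigmaFinite μ] [NullSingletonClass μ]
    (p q : Ω → ℝ) (hp : Measurable p) (hq : Measurable q)
    (h1 : ∀ t, 1 ≤ q t) (hqp : ∀ t, q t ≤ p t) :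
    ∀ t : Ω, ∀ u : ℝ≥0,
      ominus (fun t (u : ℝ≥0) => ((u : ℝ≥0∞) ^ (q t)) / ENNReal.ofReal (q t))
        (fun t (u : ℝ≥0) => ((u : ℝ≥0∞) ^ (p t)) / ENNReal.ofReal (p t)) t u =
      if q t < p t then
        ((u : ℝ≥0∞) ^ ((p t * q t) / (p t - q t))) /
          ENNReal.ofReal ((p t * q t) / (p t - q t))
      else (if u ≤ 1 then 0 else ∞) := by
  intro t u
  have hQ1 : 1 ≤ q t := h1 t
  have hQP : q t ≤ p t := hqp t
  have hQ0 : (0:ℝ) < q t := lt_of_lt_of_le one_pos hQ1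
  have hP0 : (0:ℝ) < p t := lt_of_lt_of_le hQ0 hQP
  have hoQ0 : ENNReal.ofReal (q t) ≠ 0 := (ENNReal.ofReal_pos.2 hQ0).ne'
  have hoP0 : ENNReal.ofReal (p t) ≠ 0 := (ENNReal.ofReal_pos.2 hP0).ne'
  have hb : bFun (fun t (u : ℝ≥0) => ((u : ℝ≥0∞) ^ (p t)) / ENNReal.ofReal (p t)) t = ∞ := by
    have : ∀ v : ℝ≥0, ¬ (((v : ℝ≥0∞) ^ (p t)) / ENNReal.ofReal (p t) = ∞) := fun v =>
      (ENNReal.div_lt_top (ENNReal.rpow_ne_top_of_nonneg hP0.le ENNReal.coe_ne_top) hoP0).ne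
    simp [bFun, this]
  have homi : ominus (fun t (u : ℝ≥0) => ((u : ℝ≥0∞) ^ (q t)) / ENNReal.ofReal (q t))
      (fun t (u : ℝ≥0) => ((u : ℝ≥0∞) ^ (p t)) / ENNReal.ofReal (p t)) t u =
      ⨆ s : ℝ≥0, ((s : ℝ≥0∞) * (u : ℝ≥0∞)) ^ (q t) / ENNReal.ofReal (q t)
        - (s : ℝ≥0∞) ^ (p t) / ENNReal.ofReal (p t) := by
    simp only [ominus, hb, ENNReal.coe_lt_top, iSup_pos, ENNReal.coe_mul]
  rw [homi]
  by_cases hlt : q t < p t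
  · rw [if_pos hlt]
    set R : ℝ := p t * q t / (p t - q t) with hRdef
    have hPQ0 : (0:ℝ) < p t - q t := sub_pos.2 hlt
    have hR0 : (0:ℝ) < R := div_pos (mul_pos hP0 hQ0) hPQ0
    rcases eq_or_ne u 0 with hu | hu
    · subst hu
      simp [ENNReal.zero_rpow_of_pos hQ0, ENNReal.zero_rpow_of_pos hR0, zero_tsub]
    have hu0 : (u : ℝ≥0∞) ≠ 0 := by exact_mod_cast hu
    have huT : (u : ℝ≥0∞) ≠ ∞ := ENNReal.coe_ne_top
    apply le_antisymm
    · refine iSup_le fun s => ?_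
      rw [tsub_le_iff_right]
      have hconj : Real.HolderConjugate (p t / q t) (R / q t) := by
        constructor
        · rw [hRdef]; field_simp <;> ring
        · exact div_pos hP0 hQ0
        · exact div_pos hR0 hQ0
      have hy := ENNReal.young_inequality ((s : ℝ≥0∞) ^ (q t)) ((u : ℝ≥0∞) ^ (q t)) hconj
      calc ((s : ℝ≥0∞) * (u : ℝ≥0∞)) ^ (q t) / ENNReal.ofReal (q t)
          ≤ (((s : ℝ≥0∞) ^ (q t)) ^ (p t / q t) / ENNReal.ofReal (p t / q t)
            + ((u : ℝ≥0∞) ^ (q t)) ^ (R / q t) / ENNReal.ofReal (R / q t))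
              / ENNReal.ofReal (q t) := by
            rw [ENNReal.mul_rpow_of_nonneg _ _ hQ0.le]
            exact ENNReal.div_le_div_right hy _
        _ = (s : ℝ≥0∞) ^ (p t) / ENNReal.ofReal (p t)
            + (u : ℝ≥0∞) ^ R / ENNReal.ofReal R := by
            have e1 : q t * (p t / q t) = p t := by field_simp
            have e2 : q t * (R / q t) = R := by field_simp
            rw [ENNReal.add_div, ddiv _ (div_pos hP0 hQ0) hQ0, ddiv _ (div_pos hR0 hQ0) hQ0,
              ← ENNReal.rpow_mul, ← ENNReal.rpow_mul, e1, e2]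
            rw [div_mul_cancel₀ _ hQ0.ne', div_mul_cancel₀ _ hQ0.ne']
        _ ≤ (u : ℝ≥0∞) ^ R / ENNReal.ofReal R
            + (s : ℝ≥0∞) ^ (p t) / ENNReal.ofReal (p t) := (add_comm _ _).le
    · set s₀ : ℝ≥0 := u ^ (q t / (p t - q t)) with hs₀
      have hcoe : (s₀ : ℝ≥0∞) = (u : ℝ≥0∞) ^ (q t / (p t - q t)) :=
        ENNReal.coe_rpow_of_nonneg _ (div_pos hQ0 hPQ0).le
      have h1' : ((s₀ : ℝ≥0∞) * (u : ℝ≥0∞)) ^ (q t) = (u : ℝ≥0∞) ^ R := by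
        rw [ENNReal.mul_rpow_of_nonneg _ _ hQ0.le, hcoe, ← ENNReal.rpow_mul,
          ← ENNReal.rpow_add _ _ hu0 huT]
        congr 1
        rw [hRdef]
        field_simp
        ring
      have h2' : (s₀ : ℝ≥0∞) ^ (p t) = (u : ℝ≥0∞) ^ R := by
        rw [hcoe, ← ENNReal.rpow_mul]
        congr 1
        rw [hRdef]
        field_simp
      have hsum : (u : ℝ≥0∞) ^ R / ENNReal.ofReal R
          + (u : ℝ≥0∞) ^ R / ENNReal.ofReal (p t) = (u : ℝ≥0∞) ^ R / ENNReal.ofReal (q t) := by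
        rw [div_eq_mul_inv, div_eq_mul_inv, div_eq_mul_inv, ← mul_add]
        congr 1
        rw [← ENNReal.ofReal_inv_of_pos hR0, ← ENNReal.ofReal_inv_of_pos hP0,
          ← ENNReal.ofReal_inv_of_pos hQ0,
          ← ENNReal.ofReal_add (inv_nonneg.2 hR0.le) (inv_nonneg.2 hP0.le)]
        congr 1
        rw [hRdef]
        field_simp
        ring
      have hkey : (u : ℝ≥0∞) ^ R / ENNReal.ofReal R
          = ((s₀ : ℝ≥0∞) * (u : ℝ≥0∞)) ^ (q t) / ENNReal.ofReal (q t)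
            - (s₀ : ℝ≥0∞) ^ (p t) / ENNReal.ofReal (p t) := by
        rw [h1', h2']
        exact ENNReal.eq_sub_of_add_eq
          (ENNReal.div_lt_top (ENNReal.rpow_ne_top_of_nonneg hR0.le huT) hoP0).ne hsum
      rw [hkey]
      exact le_iSup (fun s : ℝ≥0 => ((s : ℝ≥0∞) * (u : ℝ≥0∞)) ^ (q t) / ENNReal.ofReal (q t)
        - (s : ℝ≥0∞) ^ (p t) / ENNReal.ofReal (p t)) s₀
  · rw [if_neg hlt]
    have hPQ : p t = q t := le_antisymm (not_lt.1 hlt) hQP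
    rw [hPQ]
    by_cases hu : u ≤ 1
    · rw [if_pos hu]
      have : ∀ s : ℝ≥0, ((s : ℝ≥0∞) * (u : ℝ≥0∞)) ^ (q t) / ENNReal.ofReal (q t)
          - (s : ℝ≥0∞) ^ (q t) / ENNReal.ofReal (q t) = 0 := by
        intro s
        refine tsub_eq_zero_of_le (ENNReal.div_le_div_right (ENNReal.rpow_le_rpow ?_ hQ0.le) _)
        exact mul_le_of_le_one_right zero_le (by exact_mod_cast hu)
      simp [this]
    · rw [if_neg hu]
      push_neg at hu
      have huQ : (1:ℝ≥0∞) < (u : ℝ≥0∞) ^ (q t) := by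
        calc (1:ℝ≥0∞) < (u : ℝ≥0∞) := by exact_mod_cast hu
          _ ≤ (u : ℝ≥0∞) ^ (q t) :=
            ENNReal.le_rpow_self_of_one_le (by exact_mod_cast hu.le) hQ1
      set c : ℝ≥0∞ := (u : ℝ≥0∞) ^ (q t) - 1 with hc
      have hc0 : c ≠ 0 := (tsub_pos_of_lt huQ).ne'
      have hterm : ∀ s : ℝ≥0, ((s : ℝ≥0∞) * (u : ℝ≥0∞)) ^ (q t) / ENNReal.ofReal (q t)
          - (s : ℝ≥0∞) ^ (q t) / ENNReal.ofReal (q t)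
          = (s : ℝ≥0∞) ^ (q t) * c / ENNReal.ofReal (q t) := by
        intro s
        have hfin : (s : ℝ≥0∞) ^ (q t) ≠ ∞ :=
          ENNReal.rpow_ne_top_of_nonneg hQ0.le ENNReal.coe_ne_top
        rw [ENNReal.mul_rpow_of_nonneg _ _ hQ0.le, ← ENNReal.sub_div (fun _ _ => hoQ0),
          hc, ENNReal.mul_sub (fun _ _ => hfin), mul_one]
      rw [eq_top_iff]
      calc (⊤:ℝ≥0∞) = (⨆ s : ℝ≥0, (s : ℝ≥0∞) ^ (q t)) * c / ENNReal.ofReal (q t) := by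
            have hsup : (⨆ s : ℝ≥0, (s : ℝ≥0∞) ^ (q t)) = ⊤ := by
              rw [iSup_eq_top]
              intro b hb
              have h1b : b < ((b.toNNReal + 1 : ℝ≥0) : ℝ≥0∞) := by
                rw [ENNReal.coe_add]
                exact lt_of_le_of_lt (le_of_eq (ENNReal.coe_toNNReal hb.ne).symm)
                  (ENNReal.lt_add_right ENNReal.coe_ne_top one_ne_zero)
              have h2b : ((b.toNNReal + 1 : ℝ≥0) : ℝ≥0∞)
                  ≤ ((b.toNNReal + 1 : ℝ≥0) : ℝ≥0∞) ^ q t :=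
                ENNReal.le_rpow_self_of_one_le (by rw [ENNReal.coe_add]; simp) hQ1
              exact ⟨b.toNNReal + 1, h1b.trans_le h2b⟩
            rw [hsup, ENNReal.top_mul hc0, ENNReal.top_div_of_ne_top ENNReal.ofReal_ne_top]
        _ = ⨆ s : ℝ≥0, (s : ℝ≥0∞) ^ (q t) * c / ENNReal.ofReal (q t) := by
            rw [ENNReal.iSup_mul, ENNReal.iSup_div]
        _ ≤ ⨆ s : ℝ≥0, ((s : ℝ≥0∞) * (u : ℝ≥0∞)) ^ (q t) / ENNReal.ofReal (q t)
            - (s : ℝ≥0∞) ^ (q t) / ENNReal.ofReal (q t) := by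
            refine iSup_mono fun s => ?_
            rw [hterm s]
end
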